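/- arXiv:1111.6278 — 2 statements merged into one kernel-verified Lean document; each statement's English description precedes it below -/
import Mathlib

section
/- Let G be a connected bipartite simple graph with s ≥ 2 edges, and let f = t^a − t^b ∈ I(X) with a = (a_1,…,a_s), b = (b_1,…,b_s) ∈ ℕ^s such that supp(a) ∩ supp(b) = ∅ and a_j ≤ q−2 and b_j ≤ q−2 for all j. If the edge e_i does not belong to any cycle of G (equivalently, e_i is a bridge of G), then a_i = b_i = 0. -/
open MvPolynomial

noncomputable section

/-- For `x : Fin n → M` and an edge `E = {j,k}` (as an element of `Sym2 (Fin n)`),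
`edgeProd x E = x j * x k`. -/
def edgeProd {M : Type} [CommMonoid M] {n : ℕ} (x : Fin n → M) (E : Sym2 (Fin n)) : M :=
  Sym2.lift ⟨fun a b => x a * x b, fun a b => mul_comm (x a) (x b)⟩ E

/-- The vanishing ideal `I(X) ⊆ K[t_1,…,t_s]` of the algebraic toric set parameterized by
the edges `e_1,…,e_s` of a graph. -/
def graphVanishingIdeal (K : Type) [Field K] {n s : ℕ} (e : Fin s → Sym2 (Fin n)) :
    Ideal (MvPolynomial (Fin s) K) :=
  Ideal.span {f | (∃ d, f.IsHomogeneous d) ∧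
    ∀ x : Fin n → Kˣ, eval (fun i => ((edgeProd x (e i) : Kˣ) : K)) f = 0}

lemma sym2_rep {α : Type*} (z : Sym2 α) : ∃ u w, z = s(u, w) :=
  Sym2.ind (fun u w => ⟨u, w, rfl⟩) z

lemma fin2_a : ∀ α β γ : Fin 2, α ≠ β → α = γ → ¬ β = γ := by decide

lemma fin2_b : ∀ α β γ : Fin 2, α ≠ β → ¬ α = γ → β = γ := by decide

/-- Let `G` be a connected bipartite simple graph with `s ≥ 2` edges and let
`f = t^a − t^b ∈ I(X)` with `supp(a) ∩ supp(b) = ∅` and all exponents `≤ q−2`.  If the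
edge `e_i` lies on no cycle of `G` (equivalently, `e_i` is a bridge) then
`a_i = b_i = 0`. -/
theorem bridge_variable_does_not_occur
    (q n s : ℕ) (hq : 2 < q) (hs : 2 ≤ s) (K : Type) [Field K] [Fintype K]
    (hcard : Fintype.card K = q)
    (e : Fin s → Sym2 (Fin n)) (he : Function.Injective e)
    (hnd : ∀ i, ¬ (e i).IsDiag)
    (hiso : ∀ v : Fin n, ∃ i, v ∈ e i)
    (G : SimpleGraph (Fin n)) (hG : G = SimpleGraph.fromEdgeSet (Set.range e))
    (hconn : G.Connected) (hbip : G.Colorable 2)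
    (a b : Fin s →₀ ℕ)
    (hf : (monomial a 1 - monomial b 1 : MvPolynomial (Fin s) K) ∈
      graphVanishingIdeal K e)
    (hdisj : Disjoint a.support b.support)
    (ha : ∀ j, a j ≤ q - 2) (hb : ∀ j, b j ≤ q - 2)
    (i : Fin s) (hbridge : G.IsBridge (e i)) :
    a i = 0 ∧ b i = 0 := by
  classical
  obtain ⟨u, w, huw⟩ := sym2_rep (e i)
  rw [huw] at hbridge
  rw [SimpleGraph.isBridge_iff] at hbridge
  have hnreach : ¬ (G \ SimpleGraph.fromEdgeSet {s(u, w)}).Reachable u w := hbridge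
  set G' : SimpleGraph (Fin n) := G \ SimpleGraph.fromEdgeSet {s(u, w)} with hG'
  obtain ⟨C⟩ := hbip
  -- key: for every unit μ, μ^(a i) = μ^(b i)
  have key : ∀ μ : Kˣ, (μ : K) ^ (a i) = (μ : K) ^ (b i) := by
    intro μ
    set x : Fin n → Kˣ := fun v =>
      if G'.Reachable u v then (if C v = C u then μ else μ⁻¹) else 1 with hx
    have hvan : eval (fun j => ((edgeProd x (e j) : Kˣ) : K))
        (monomial a 1 - monomial b 1 : MvPolynomial (Fin s) K) = 0 := by
      have hle : graphVanishingIdeal K e ≤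
          RingHom.ker (eval (fun j => ((edgeProd x (e j) : Kˣ) : K))) := by
        rw [graphVanishingIdeal, Ideal.span_le]
        rintro g ⟨-, hg⟩
        exact hg x
      exact hle hf
    -- value of edges
    have hxu : x u = μ := by
      have hru : G'.Reachable u u := SimpleGraph.Reachable.refl u
      simp [hx, hru]
    have hxw : x w = 1 := by simp [hx, hnreach]
    have hei : edgeProd x (e i) = μ := by
      rw [huw]
      show x u * x w = μ
      rw [hxu, hxw, mul_one]
    have hej : ∀ j, j ≠ i → edgeProd x (e j) = 1 := by
      intro j hj
      obtain ⟨p, r, hpr⟩ := sym2_rep (e j)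
      have hadjpr : G.Adj p r := by
        rw [hG, SimpleGraph.fromEdgeSet_adj]
        constructor
        · rw [← hpr]; exact ⟨j, rfl⟩
        · intro h; exact hnd j (by rw [hpr, h]; exact Sym2.mk_isDiag_iff.mpr rfl)
      have hadj' : G'.Adj p r := by
        rw [hG', SimpleGraph.sdiff_adj]
        refine ⟨hadjpr, ?_⟩
        rw [SimpleGraph.fromEdgeSet_adj]
        rintro ⟨hmem, -⟩
        apply hj
        apply he
        rw [hpr, huw]
        exact hmem
      have hiff : G'.Reachable u p ↔ G'.Reachable u r :=
        ⟨fun h => h.trans hadj'.reachable, fun h => h.trans hadj'.symm.reachable⟩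
      rw [hpr]
      show x p * x r = 1
      by_cases hp : G'.Reachable u p
      · have hr : G'.Reachable u r := hiff.mp hp
        have hcol : C p ≠ C r := C.valid hadjpr
        by_cases hcp : C p = C u
        · have hcr : ¬ C r = C u := fin2_a _ _ _ hcol hcp
          simp [hx, hp, hr, hcp, hcr]
        · have hcr : C r = C u := fin2_b _ _ _ hcol hcp
          simp [hx, hp, hr, hcp, hcr]
      · have hr : ¬ G'.Reachable u r := fun h => hp (hiff.mpr h)
        simp [hx, hp, hr]
    -- now compute eval
    have heval : ∀ (c : Fin s →₀ ℕ),
        eval (fun j => ((edgeProd x (e j) : Kˣ) : K)) (monomial c (1:K)) = (μ : K) ^ (c i) := by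
      intro c
      rw [eval_monomial]
      rw [one_mul]
      rw [Finsupp.prod]
      rw [Finset.prod_eq_single i]
      · rw [hei]
      · intro j hjs hji
        rw [hej j hji]
        simp
      · intro hi
        rw [Finsupp.notMem_support_iff.mp hi, pow_zero]
    rw [map_sub, heval, heval, sub_eq_zero] at hvan
    exact hvan
  -- conclude a i = b i from cyclic group
  have hab : a i = b i := by
    obtain ⟨g, hg⟩ := IsCyclic.exists_generator (α := Kˣ)
    have hgab : g ^ (a i) = g ^ (b i) := Units.ext (by push_cast; exact key g)
    have horder : orderOf g = q - 1 := by
      rw [orderOf_eq_card_of_forall_mem_zpowers hg, Nat.card_eq_fintype_card, Fintype.card_units, hcard]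
    have hmod : a i ≡ b i [MOD q - 1] := by
      rw [← horder]
      exact (pow_eq_pow_iff_modEq.mp hgab)
    exact Nat.ModEq.eq_of_lt_of_lt hmod (by have := ha i; omega) (by have := hb i; omega)
  by_cases h0 : a i = 0
  · exact ⟨h0, hab ▸ h0⟩
  · exfalso
    have : i ∈ a.support ∩ b.support :=
      Finset.mem_inter.mpr ⟨Finsupp.mem_support_iff.mpr h0,
        Finsupp.mem_support_iff.mpr (hab ▸ h0)⟩
    rw [Finset.disjoint_iff_inter_eq_empty.mp hdisj] at this
    exact absurd this (Finset.notMem_empty i)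
end
end

section
/- Let G be any simple graph with s ≥ 2 edges and no isolated vertices, and let f = t^a − t^b ∈ I(X) with a = (a_1,…,a_s), b = (b_1,…,b_s) ∈ ℕ^s such that supp(a) ∩ supp(b) = ∅ and a_j ≤ q−2 and b_j ≤ q−2 for all j. If the edge e_i has an endpoint of degree 1 in G, then a_i = b_i = 0. -/
open MvPolynomial

noncomputable section

lemma edgeProd_mk {M : Type} [CommMonoid M] {n : ℕ} (x : Fin n → M) (c d : Fin n) :
    edgeProd x s(c, d) = x c * x d := rfl

/-- Let `G` be a simple graph with `s ≥ 2` edges and no isolated vertices and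
let `f = t^a − t^b ∈ I(X)` with `supp(a) ∩ supp(b) = ∅` and all exponents `≤ q−2`. If the
edge `e_i` has an endpoint `v` of degree `1` in `G` (i.e. `v ∈ e_i` and `e_i` is the only
edge containing `v`), then `a_i = b_i = 0`. -/
theorem pendant_edge_variable_does_not_occur
    (q n s : ℕ) (hq : 2 < q) (hs : 2 ≤ s) (K : Type) [Field K] [Fintype K]
    (hcard : Fintype.card K = q)
    (e : Fin s → Sym2 (Fin n)) (he : Function.Injective e)
    (hnd : ∀ i, ¬ (e i).IsDiag)
    (hiso : ∀ v : Fin n, ∃ i, v ∈ e i)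
    (a b : Fin s →₀ ℕ)
    (hf : (monomial a 1 - monomial b 1 : MvPolynomial (Fin s) K) ∈
      graphVanishingIdeal K e)
    (hdisj : Disjoint a.support b.support)
    (ha : ∀ j, a j ≤ q - 2) (hb : ∀ j, b j ≤ q - 2)
    (i : Fin s) (v : Fin n) (hv : v ∈ e i)
    (hdeg : ∀ j, v ∈ e j → j = i) :
    a i = 0 ∧ b i = 0 := by
  classical
  -- Every element of the vanishing ideal vanishes at every point.
  have hvanish : ∀ x : Fin n → Kˣ,
      eval (fun j => ((edgeProd x (e j) : Kˣ) : K))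
        ((monomial a 1 - monomial b 1 : MvPolynomial (Fin s) K)) = 0 := by
    intro x
    have hle : graphVanishingIdeal K e ≤
        RingHom.ker (eval (fun j => ((edgeProd x (e j) : Kˣ) : K))) := by
      rw [graphVanishingIdeal, Ideal.span_le]
      intro f hf'
      exact hf'.2 x
    exact hle hf
  have hq1 : Fintype.card Kˣ = q - 1 := by rw [Fintype.card_units, hcard]
  obtain ⟨g, hg⟩ := IsCyclic.exists_generator (α := Kˣ)
  have horder : orderOf g = q - 1 := by
    rw [orderOf_eq_card_of_forall_mem_zpowers hg, Nat.card_eq_fintype_card, hq1]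
  set x : Fin n → Kˣ := fun u => if u = v then g else 1 with hxdef
  have hne : ∀ j, j ≠ i → edgeProd x (e j) = 1 := by
    intro j hj
    have hvj : v ∉ e j := fun h => hj (hdeg j h)
    obtain ⟨c, d, hEj⟩ : ∃ c d, e j = s(c, d) := by
      induction e j using Sym2.ind with
      | _ p r => exact ⟨p, r, rfl⟩
    rw [hEj] at hvj
    rw [hEj, edgeProd_mk]
    have hc : c ≠ v := fun h => hvj (h ▸ Sym2.mem_mk_left c d)
    have hd : d ≠ v := fun h => hvj (h ▸ Sym2.mem_mk_right c d)
    simp [hxdef, hc, hd]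
  have hi : edgeProd x (e i) = g := by
    obtain ⟨c, d, hEi⟩ : ∃ c d, e i = s(c, d) := by
      induction e i using Sym2.ind with
      | _ p r => exact ⟨p, r, rfl⟩
    have hvmem : v ∈ s(c, d) := hEi ▸ hv
    have hdiag : ¬ (s(c, d) : Sym2 (Fin n)).IsDiag := hEi ▸ hnd i
    have hcd : c ≠ d := by simpa [Sym2.mk_isDiag_iff] using hdiag
    rw [hEi, edgeProd_mk]
    rcases Sym2.mem_iff.mp hvmem with h | h
    · subst h
      simp [hxdef, hcd.symm]
    · subst h
      simp [hxdef, hcd]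
  -- Evaluate the binomial at this point.
  have heval := hvanish x
  rw [map_sub, eval_monomial, eval_monomial, one_mul, one_mul, sub_eq_zero] at heval
  have hprod : ∀ c : Fin s →₀ ℕ,
      (c.prod fun j k => ((edgeProd x (e j) : Kˣ) : K) ^ k) = ((g : K)) ^ c i := by
    intro c
    rw [Finsupp.prod]
    rcases eq_or_ne (c i) 0 with h0 | h0
    · rw [h0, pow_zero]
      apply Finset.prod_eq_one
      intro j hjmem
      have hji : j ≠ i := by
        rintro rfl
        exact (Finsupp.mem_support_iff.mp hjmem) h0
      rw [hne j hji]
      simp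
    · rw [Finset.prod_eq_single i]
      · rw [hi]
      · intro j hjmem hji
        rw [hne j hji]
        simp
      · intro hnot
        exact absurd (Finsupp.notMem_support_iff.mp hnot) h0
  rw [hprod a, hprod b] at heval
  have hunits : g ^ a i = g ^ b i := by
    apply Units.ext
    simpa using heval
  have hmod : a i ≡ b i [MOD (q - 1)] := by
    rw [← horder]
    exact (pow_eq_pow_iff_modEq).mp hunits
  have hlt : ∀ j, a j < q - 1 ∧ b j < q - 1 := by
    intro j
    constructor
    · exact lt_of_le_of_lt (ha j) (by omega)
    · exact lt_of_le_of_lt (hb j) (by omega)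
  have hab : a i = b i := by
    have h1 := (hlt i).1
    have h2 := (hlt i).2
    have := hmod
    unfold Nat.ModEq at this
    rwa [Nat.mod_eq_of_lt h1, Nat.mod_eq_of_lt h2] at this
  have hai : a i = 0 := by
    by_contra h
    have hia : i ∈ a.support := Finsupp.mem_support_iff.mpr h
    have hib : i ∈ b.support := Finsupp.mem_support_iff.mpr (hab ▸ h)
    exact (Finset.disjoint_left.mp hdisj hia) hib
  exact ⟨hai, hab ▸ hai⟩
end
end
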